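/- Let U ≤ G = S_h × S_n be a regular subgroup. Then the orbit extension O(U) is regular, the set of U-symmetric SPFs equals the set of O(U)-symmetric SPFs (F^U = F^{O(U)}), and the intersection of the symmetry groups G(F) over all U-symmetric social preference functions F equals O(U). -/

import Mathlib

open Equiv

/-- The action of `S_h × S_n` on preference profiles `p : Fin h → Perm (Fin n)`:
`(p^{(φ,ψ)})_i = ψ ∘ p_{φ⁻¹ i}`. -/
def act {h n : ℕ} (g : Perm (Fin h) × Perm (Fin n)) (p : Fin h → Perm (Fin n)) :
    Fin h → Perm (Fin n) :=
  fun i => g.2 * p (g.1⁻¹ i)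

/-- The symmetry group `G(F)` of a social preference function `F`. -/
def symGroup {h n : ℕ} (F : (Fin h → Perm (Fin n)) → Perm (Fin n)) :
    Subgroup (Perm (Fin h) × Perm (Fin n)) where
  carrier := {g | ∀ p, F (act g p) = g.2 * F p}
  one_mem' := by
    intro p
    have h1 : act (1 : Perm (Fin h) × Perm (Fin n)) p = p := by
      funext i; simp [act]
    rw [h1]; simp
  mul_mem' := by
    intro a b ha hb p
    have hab : act (a * b) p = act a (act b p) := by
      funext i
      simp [act, mul_assoc]
    rw [hab, ha, hb, Prod.snd_mul, mul_assoc]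
  inv_mem' := by
    intro a ha p
    have key := ha (act a⁻¹ p)
    have h1 : act a (act a⁻¹ p) = p := by
      funext i
      simp [act, mul_assoc]
    rw [h1] at key
    rw [key]
    simp [mul_assoc]

/-- A subgroup `U ≤ S_h × S_n` is regular if every stabilized profile forces
the second component to be the identity. -/
def IsRegularSubgroup {h n : ℕ} (U : Subgroup (Perm (Fin h) × Perm (Fin n))) : Prop :=
  ∀ (p : Fin h → Perm (Fin n)) (g : Perm (Fin h) × Perm (Fin n)),
    g ∈ U → act g p = p → g.2 = 1

/-- `F` is `U`-symmetric: `F (p^g) = g.2 * F p` for all `g ∈ U`. -/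
def USymmetric {h n : ℕ} (U : Subgroup (Perm (Fin h) × Perm (Fin n)))
    (F : (Fin h → Perm (Fin n)) → Perm (Fin n)) : Prop :=
  ∀ (p : Fin h → Perm (Fin n)) (g : Perm (Fin h) × Perm (Fin n)),
    g ∈ U → F (act g p) = g.2 * F p

/-- `U ≤_P V`: every `U`-orbit on profiles is contained in the corresponding `V`-orbit. -/
def orbLE {h n : ℕ} (U V : Subgroup (Perm (Fin h) × Perm (Fin n))) : Prop :=
  ∀ (p : Fin h → Perm (Fin n)) (g : Perm (Fin h) × Perm (Fin n)),
    g ∈ U → ∃ g' ∈ V, act g p = act g' p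

/-- The orbit extension `O(U)`: the subgroup generated by all regular
overgroups `V ≥ U` with `V ≤_P U`. -/
def orbitExt {h n : ℕ} (U : Subgroup (Perm (Fin h) × Perm (Fin n))) :
    Subgroup (Perm (Fin h) × Perm (Fin n)) :=
  ⨆ (V : Subgroup (Perm (Fin h) × Perm (Fin n)))
    (_ : IsRegularSubgroup V ∧ U ≤ V ∧ orbLE V U), V


namespace OrbitExtAux

variable {h n : ℕ}

lemma act_mul (a b : Perm (Fin h) × Perm (Fin n)) (p : Fin h → Perm (Fin n)) :
    act (a * b) p = act a (act b p) := by
  funext i; simp [act, mul_assoc]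

lemma act_one (p : Fin h → Perm (Fin n)) : act (1 : Perm (Fin h) × Perm (Fin n)) p = p := by
  funext i; simp [act]

lemma snd_eq_of_act_eq {V : Subgroup (Perm (Fin h) × Perm (Fin n))}
    (hV : IsRegularSubgroup V) {a b : Perm (Fin h) × Perm (Fin n)}
    (ha : a ∈ V) (hb : b ∈ V) {p : Fin h → Perm (Fin n)}
    (he : act a p = act b p) : a.2 = b.2 := by
  have h1 : act (b⁻¹ * a) p = p := by
    rw [act_mul, he, ← act_mul, inv_mul_cancel, act_one]
  have h2 := hV p (b⁻¹ * a) (V.mul_mem (V.inv_mem hb) ha) h1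
  have h3 : b.2⁻¹ * a.2 = 1 := h2
  calc a.2 = b.2 * (b.2⁻¹ * a.2) := by group
    _ = b.2 := by rw [h3, mul_one]

def prel (U : Subgroup (Perm (Fin h) × Perm (Fin n))) :
    Setoid (Fin h → Perm (Fin n)) where
  r p q := ∃ g ∈ U, act g p = q
  iseqv := by
    refine ⟨fun p => ⟨1, U.one_mem, act_one p⟩, ?_, ?_⟩
    · rintro p q ⟨g, hg, he⟩
      exact ⟨g⁻¹, U.inv_mem hg, by rw [← he, ← act_mul, inv_mul_cancel, act_one]⟩
    · rintro p q r ⟨g, hg, he⟩ ⟨g', hg', he'⟩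
      exact ⟨g' * g, U.mul_mem hg' hg, by rw [act_mul, he, he']⟩

lemma exists_chooser (U : Subgroup (Perm (Fin h) × Perm (Fin n)))
    (p : Fin h → Perm (Fin n)) :
    ∃ g ∈ U, act g (Quotient.mk (prel U) p).out = p :=
  Quotient.exact ((Quotient.mk (prel U) p).out_eq)

noncomputable def chooser (U : Subgroup (Perm (Fin h) × Perm (Fin n)))
    (p : Fin h → Perm (Fin n)) : Perm (Fin h) × Perm (Fin n) :=
  (exists_chooser U p).choose

lemma chooser_mem (U : Subgroup (Perm (Fin h) × Perm (Fin n)))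
    (p : Fin h → Perm (Fin n)) : chooser U p ∈ U :=
  (exists_chooser U p).choose_spec.1

lemma chooser_spec (U : Subgroup (Perm (Fin h) × Perm (Fin n)))
    (p : Fin h → Perm (Fin n)) :
    act (chooser U p) (Quotient.mk (prel U) p).out = p :=
  (exists_chooser U p).choose_spec.2

noncomputable def mkF (U : Subgroup (Perm (Fin h) × Perm (Fin n)))
    (base : Quotient (prel U) → Perm (Fin n)) :
    (Fin h → Perm (Fin n)) → Perm (Fin n) :=
  fun p => (chooser U p).2 * base (Quotient.mk (prel U) p)

lemma mk_act_eq (U : Subgroup (Perm (Fin h) × Perm (Fin n)))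
    {g : Perm (Fin h) × Perm (Fin n)} (hg : g ∈ U) (p : Fin h → Perm (Fin n)) :
    Quotient.mk (prel U) (act g p) = Quotient.mk (prel U) p :=
  Quotient.sound ⟨g⁻¹, U.inv_mem hg, by rw [← act_mul, inv_mul_cancel, act_one]⟩

lemma mkF_symm (U : Subgroup (Perm (Fin h) × Perm (Fin n)))
    (hU : IsRegularSubgroup U) (base : Quotient (prel U) → Perm (Fin n)) :
    USymmetric U (mkF U base) := by
  intro p g hg
  have hq := mk_act_eq U hg p
  have h1 : act (chooser U (act g p)) (Quotient.mk (prel U) p).out = act g p := by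
    have := chooser_spec U (act g p); rwa [hq] at this
  have h2 : act (g * chooser U p) (Quotient.mk (prel U) p).out = act g p := by
    rw [act_mul, chooser_spec]
  have hsnd : (chooser U (act g p)).2 = (g * chooser U p).2 :=
    snd_eq_of_act_eq hU (chooser_mem U (act g p))
      (U.mul_mem hg (chooser_mem U p)) (h1.trans h2.symm)
  show (chooser U (act g p)).2 * base (Quotient.mk (prel U) (act g p)) =
      g.2 * ((chooser U p).2 * base (Quotient.mk (prel U) p))
  rw [hq, hsnd, Prod.snd_mul, mul_assoc]

end OrbitExtAux

/-- For regular `U`: `O(U)` is regular, `F^U = F^{O(U)}`, and the intersection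
of the symmetry groups of all `U`-symmetric SPFs equals `O(U)`. -/
theorem orbitExt_properties (h n : ℕ) (hh : 2 ≤ h) (hn : 2 ≤ n)
    (U : Subgroup (Perm (Fin h) × Perm (Fin n)))
    (hU : IsRegularSubgroup U) :
    IsRegularSubgroup (orbitExt U) ∧
    (∀ F : (Fin h → Perm (Fin n)) → Perm (Fin n),
        USymmetric U F ↔ USymmetric (orbitExt U) F) ∧
    (⨅ (F : (Fin h → Perm (Fin n)) → Perm (Fin n)) (_ : USymmetric U F),
        symGroup F) = orbitExt U := by
  classical
  open OrbitExtAux in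
  set W : Subgroup (Perm (Fin h) × Perm (Fin n)) :=
    ⨅ (F : (Fin h → Perm (Fin n)) → Perm (Fin n)) (_ : USymmetric U F), symGroup F with hW
  have memW : ∀ g, g ∈ W ↔
      ∀ F : (Fin h → Perm (Fin n)) → Perm (Fin n), USymmetric U F → g ∈ symGroup F := by
    intro g; simp [hW, Subgroup.mem_iInf]
  -- a nontrivial permutation target
  have hnt : Nontrivial (Fin n) := ⟨⟨⟨0, by omega⟩, ⟨1, by omega⟩, by simp [Fin.ext_iff]⟩⟩
  have hntP : Nontrivial (Perm (Fin n)) := by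
    obtain ⟨a, b, hab⟩ := hnt
    exact ⟨Equiv.swap a b, 1, fun hc => hab (by
      have := congrArg (fun e => e a) hc
      simpa [Equiv.swap_apply_left] using this.symm)⟩
  -- U ≤ W
  have hUW : U ≤ W := by
    intro g hg
    rw [memW]
    intro F hF p
    exact hF p g hg
  -- W is regular
  have hWreg : IsRegularSubgroup W := by
    intro p g hg hfix
    have hF0 : USymmetric U (mkF U fun _ => 1) := mkF_symm U hU _
    have := ((memW g).mp hg) _ hF0 p
    rw [hfix] at this
    exact right_eq_mul.mp this
  -- W ≤_P U
  have hWorb : orbLE W U := by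
    intro p g hg
    by_contra hc
    push_neg at hc
    have hneq : Quotient.mk (prel U) (act g p) ≠ Quotient.mk (prel U) p := by
      intro heq
      obtain ⟨u, hu, he⟩ := Quotient.exact heq
      have h2 : act u⁻¹ (act u (act g p)) = act u⁻¹ p := by rw [he]
      rw [← act_mul, inv_mul_cancel, act_one] at h2
      exact hc u⁻¹ (U.inv_mem hu) h2
    obtain ⟨σ, hσ⟩ := exists_ne ((chooser U (act g p)).2⁻¹ * (g.2 * (chooser U p).2))
    set base : Quotient (prel U) → Perm (Fin n) :=
      fun c => if c = Quotient.mk (prel U) (act g p) then σ else 1 with hbase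
    have hF : USymmetric U (mkF U base) := mkF_symm U hU base
    have hkey := ((memW g).mp hg) _ hF p
    have e1 : mkF U base (act g p) = (chooser U (act g p)).2 * σ := by
      show (chooser U (act g p)).2 * base (Quotient.mk (prel U) (act g p)) = _
      rw [hbase]; simp
    have e2 : mkF U base p = (chooser U p).2 := by
      show (chooser U p).2 * base (Quotient.mk (prel U) p) = _
      rw [hbase]; simp [hneq.symm]
    rw [e1, e2] at hkey
    apply hσ
    rw [eq_inv_mul_iff_mul_eq]
    exact hkey
  -- W ≤ orbitExt U
  have hle1 : W ≤ orbitExt U := by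
    refine le_iSup₂ (f := fun (V : Subgroup (Perm (Fin h) × Perm (Fin n)))
      (_ : IsRegularSubgroup V ∧ U ≤ V ∧ orbLE V U) => V) W ⟨hWreg, hUW, hWorb⟩
  -- orbitExt U ≤ W
  have hle2 : orbitExt U ≤ W := by
    refine iSup₂_le ?_
    rintro V ⟨hVreg, hUV, hVorb⟩ g hgV
    rw [memW]
    intro F hF p
    obtain ⟨u, hu, he⟩ := hVorb p g hgV
    have hsnd : g.2 = u.2 := snd_eq_of_act_eq hVreg hgV (hUV hu) he
    show F (act g p) = g.2 * F p
    rw [he, hF p u hu, hsnd]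
  have hWeq : W = orbitExt U := le_antisymm hle1 hle2
  refine ⟨hWeq ▸ hWreg, fun F => ⟨?_, ?_⟩, hWeq⟩
  · intro hF p g hg
    have hgW : g ∈ W := hWeq ▸ hg
    exact ((memW g).mp hgW) F hF p
  · intro hF p g hg
    exact hF p g (hWeq ▸ hUW hg)
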